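/- Let β ∈ ℝ with β > 1, A ⊂ ℤ[β] a finite alphabet containing 0, with minimum λ = min A and maximum Λ = max A. Suppose a p-local parallel addition on (β,A) exists, defined by Φ : (A+A)^p → A with p = r+t+1. Then for every b ∈ A+A with b > λ and (b ≥ 0 or t = 0), one has Φ(b,…,b) ≠ λ. -/

import Mathlib

noncomputable section

open Pointwise

/-- `ℤ[β]` inside `ℝ`: the smallest subring of `ℝ` containing `β`. -/
def ZringR (β : ℝ) : Subring ℝ := Subring.closure {β}

/-- A `p`-local digit set conversion in base `β` from `B` to `A` (over `ℝ`), with memory `r`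
and anticipation `t` (so `p = r + t + 1`), given by a local rule `Φ`. -/
def IsLocalConvR (β : ℝ) (B A : Set ℝ) (r t : ℕ)
    (Φ : (Fin (r + t + 1) → ℝ) → ℝ) : Prop :=
  (∀ u : Fin (r + t + 1) → ℝ, (∀ i, u i ∈ B) → Φ u ∈ A) ∧
  ∀ w : ℤ → ℝ, (∀ j, w j ∈ B) → (Function.support w).Finite →
    (Function.support (fun j : ℤ => Φ fun i => w (j + (t : ℤ) - ((i : ℕ) : ℤ)))).Finite ∧
    ∑ᶠ j : ℤ, w j * β ^ j =
      ∑ᶠ j : ℤ, (Φ fun i => w (j + (t : ℤ) - ((i : ℕ) : ℤ))) * β ^ j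

namespace Stmt4Aux

lemma sum_Ioc_consec (f : ℤ → ℝ) {a b c : ℤ} (hab : a ≤ b) (hbc : b ≤ c) :
    (∑ i ∈ Finset.Ioc a b, f i) + ∑ i ∈ Finset.Ioc b c, f i = ∑ i ∈ Finset.Ioc a c, f i := by
  rw [← Finset.Ioc_union_Ioc_eq_Ioc hab hbc, Finset.sum_union]
  exact Finset.disjoint_left.2 fun x hx h'x =>
    absurd ((Finset.mem_Ioc.1 h'x).1.trans_le (Finset.mem_Ioc.1 hx).2) (lt_irrefl _)

lemma sum_Ioc_succ (f : ℤ → ℝ) {a b : ℤ} (hab : a ≤ b) :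
    ∑ i ∈ Finset.Ioc a (b + 1), f i = (∑ i ∈ Finset.Ioc a b, f i) + f (b + 1) := by
  rw [← sum_Ioc_consec f hab (by omega : b ≤ b + 1)]
  congr 1
  have : Finset.Ioc b (b + 1) = {b + 1} := by
    ext x; simp only [Finset.mem_Ioc, Finset.mem_singleton]; omega
  rw [this, Finset.sum_singleton]

lemma geom_Ioc {β : ℝ} (hβ : β ≠ 0) {a c : ℤ} (h : a ≤ c) :
    (β - 1) * ∑ j ∈ Finset.Ioc a c, β ^ j = β ^ (c + 1) - β ^ (a + 1) := by
  obtain ⟨k, rfl⟩ : ∃ k : ℕ, c = a + k := ⟨(c - a).toNat, by omega⟩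
  clear h
  induction k with
  | zero => simp
  | succ k ih =>
    have hk : a + ((k + 1 : ℕ) : ℤ) = (a + (k : ℕ)) + 1 := by push_cast; ring
    rw [hk, sum_Ioc_succ _ (by omega), mul_add, ih, zpow_add_one₀ hβ (a + (k : ℕ) + 1)]
    ring

end Stmt4Aux

open Stmt4Aux in
theorem stmt4 (β : ℝ) (hβ : 1 < β) (A : Finset ℝ)
    (h0 : (0 : ℝ) ∈ A) (hA : (A : Set ℝ) ⊆ (ZringR β : Set ℝ))
    (r t : ℕ) (Φ : (Fin (r + t + 1) → ℝ) → ℝ)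
    (hpar : IsLocalConvR β ((A : Set ℝ) + (A : Set ℝ)) (A : Set ℝ) r t Φ)
    (b : ℝ) (hb : b ∈ (A : Set ℝ) + (A : Set ℝ))
    (hblam : b > A.min' ⟨0, h0⟩) (hcase : 0 ≤ b ∨ t = 0) :
    Φ (fun _ => b) ≠ A.min' ⟨0, h0⟩ := by
  intro hΦ
  set lam := A.min' ⟨0, h0⟩ with hlamdef
  have hβ0 : (0 : ℝ) < β := by linarith
  have hβne : β ≠ 0 := ne_of_gt hβ0
  have h0B : (0 : ℝ) ∈ (A : Set ℝ) + (A : Set ℝ) := by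
    simpa using Set.add_mem_add (Finset.mem_coe.2 h0) (Finset.mem_coe.2 h0)
  obtain ⟨hΦA, hconv⟩ := hpar
  -- the rule maps the zero window to 0
  have hΦ0 : Φ (fun _ => (0 : ℝ)) = 0 := by
    obtain ⟨hfin, -⟩ := hconv (fun _ => 0) (fun _ => h0B) (by simp)
    by_contra hne
    have hU : Function.support
        (fun j : ℤ => Φ fun i => (fun _ : ℤ => (0:ℝ)) (j + (t : ℤ) - ((i : ℕ) : ℤ)))
        = Set.univ := by
      ext j
      simpa using hne
    rw [hU] at hfin
    exact Set.infinite_univ hfin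
  -- abbreviations
  set g : ℤ → ℝ := fun j => Φ (fun i => if ((i : ℕ) : ℤ) ≤ j + t then b else 0) with hgdef
  set f : ℤ → ℝ := fun m => Φ (fun i => if m + t + 1 ≤ ((i : ℕ) : ℤ) then b else 0) with hfdef
  set D : ℝ := ∑ j ∈ Finset.Ioc (-(t : ℤ) - 1) ((r : ℤ) - 1), g j * β ^ j with hDdef
  set C : ℝ := ∑ m ∈ Finset.Ioc (-(t : ℤ) - 1) ((r : ℤ) - 1), f m * β ^ m with hCdef
  -- the key identity, for every n ≥ r + t
  have key : ∀ n : ℕ, r + t ≤ n →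
      b * ∑ j ∈ Finset.Ioc (-1 : ℤ) ((n : ℤ) - 1), β ^ j
        = D + lam * ∑ j ∈ Finset.Ioc ((r : ℤ) - 1) ((n : ℤ) - 1 - t), β ^ j
            + β ^ (n : ℤ) * C := by
    intro n hn
    have hnz : (r : ℤ) + t ≤ (n : ℤ) := by exact_mod_cast hn
    set w : ℤ → ℝ := fun j => if 0 ≤ j ∧ j ≤ (n : ℤ) - 1 then b else 0 with hwdef
    have hwB : ∀ j, w j ∈ (A : Set ℝ) + (A : Set ℝ) := by
      intro j
      by_cases h : 0 ≤ j ∧ j ≤ (n : ℤ) - 1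
      · rw [hwdef]; simp only []; rw [if_pos h]; exact hb
      · rw [hwdef]; simp only []; rw [if_neg h]; exact h0B
    have hwsupp : Function.support w ⊆ ↑(Finset.Ioc (-1 : ℤ) ((n : ℤ) - 1)) := by
      intro j hj
      simp only [Function.mem_support, hwdef] at hj
      by_cases h : 0 ≤ j ∧ j ≤ (n : ℤ) - 1
      · simp only [Finset.coe_Ioc, Set.mem_Ioc]; omega
      · exact absurd (if_neg h) hj
    obtain ⟨hzfin, heq⟩ := hconv w hwB ((Finset.Ioc (-1 : ℤ) ((n : ℤ) - 1)).finite_toSet.subset hwsupp)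
    have hibd : ∀ i : Fin (r + t + 1), ((i : ℕ) : ℤ) ≤ (r : ℤ) + t := by
      intro i
      exact_mod_cast Nat.lt_succ_iff.mp i.isLt
    -- LHS of the conversion identity
    have hL : ∑ᶠ j : ℤ, w j * β ^ j
        = b * ∑ j ∈ Finset.Ioc (-1 : ℤ) ((n : ℤ) - 1), β ^ j := by
      rw [finsum_eq_finset_sum_of_support_subset _
        (s := Finset.Ioc (-1 : ℤ) ((n : ℤ) - 1))
        (fun j hj => hwsupp (fun h => hj (by rw [h, zero_mul]))), Finset.mul_sum]
      refine Finset.sum_congr rfl fun j hj => ?_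
      rw [Finset.mem_Ioc] at hj
      rw [hwdef]
      simp only []
      rw [if_pos ⟨by omega, hj.2⟩]
    -- support of the output
    have hzsupp : Function.support
          (fun j : ℤ => (Φ fun i => w (j + (t : ℤ) - ((i : ℕ) : ℤ))) * β ^ j)
        ⊆ ↑(Finset.Ioc (-(t : ℤ) - 1) ((n : ℤ) + r - 1)) := by
      intro j hj
      simp only [Function.mem_support, ne_eq] at hj
      by_contra hmem
      simp only [Finset.coe_Ioc, Set.mem_Ioc, not_and_or, not_lt, not_le] at hmem
      apply hj
      have hz0 : (Φ fun i => w (j + (t : ℤ) - ((i : ℕ) : ℤ))) = 0 := by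
        have hfun : (fun i : Fin (r + t + 1) => w (j + (t : ℤ) - ((i : ℕ) : ℤ)))
            = fun _ => (0 : ℝ) := by
          funext i
          have hi := hibd i
          rw [hwdef]
          simp only []
          rw [if_neg]
          rcases hmem with h | h <;> omega
        rw [hfun, hΦ0]
      rw [hz0, zero_mul]
    have hR : ∑ᶠ j : ℤ, (Φ fun i => w (j + (t : ℤ) - ((i : ℕ) : ℤ))) * β ^ j
        = ∑ j ∈ Finset.Ioc (-(t : ℤ) - 1) ((n : ℤ) + r - 1),
            (Φ fun i => w (j + (t : ℤ) - ((i : ℕ) : ℤ))) * β ^ j :=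
      finsum_eq_finset_sum_of_support_subset _ hzsupp
    have heq' : b * ∑ j ∈ Finset.Ioc (-1 : ℤ) ((n : ℤ) - 1), β ^ j
        = ∑ j ∈ Finset.Ioc (-(t : ℤ) - 1) ((n : ℤ) + r - 1),
            (Φ fun i => w (j + (t : ℤ) - ((i : ℕ) : ℤ))) * β ^ j :=
      hL.symm.trans (heq.trans hR)
    -- split into three pieces
    have h12 : (-(t : ℤ) - 1) ≤ (r : ℤ) - 1 := by omega
    have h23 : ((r : ℤ) - 1) ≤ (n : ℤ) - 1 - t := by omega
    have h34 : ((n : ℤ) - 1 - t) ≤ (n : ℤ) + r - 1 := by omega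
    have hsplit : ∑ j ∈ Finset.Ioc (-(t : ℤ) - 1) ((n : ℤ) + r - 1),
            (Φ fun i => w (j + (t : ℤ) - ((i : ℕ) : ℤ))) * β ^ j
        = (∑ j ∈ Finset.Ioc (-(t : ℤ) - 1) ((r : ℤ) - 1),
            (Φ fun i => w (j + (t : ℤ) - ((i : ℕ) : ℤ))) * β ^ j)
          + (∑ j ∈ Finset.Ioc ((r : ℤ) - 1) ((n : ℤ) - 1 - t),
            (Φ fun i => w (j + (t : ℤ) - ((i : ℕ) : ℤ))) * β ^ j)
          + (∑ j ∈ Finset.Ioc ((n : ℤ) - 1 - t) ((n : ℤ) + r - 1),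
            (Φ fun i => w (j + (t : ℤ) - ((i : ℕ) : ℤ))) * β ^ j) := by
      rw [sum_Ioc_consec _ h12 h23, sum_Ioc_consec _ (h12.trans h23) h34]
    -- bottom piece
    have hbot : ∑ j ∈ Finset.Ioc (-(t : ℤ) - 1) ((r : ℤ) - 1),
            (Φ fun i => w (j + (t : ℤ) - ((i : ℕ) : ℤ))) * β ^ j = D := by
      rw [hDdef]
      refine Finset.sum_congr rfl fun j hj => ?_
      rw [Finset.mem_Ioc] at hj
      congr 1
      rw [hgdef]
      simp only []
      congr 1
      funext i
      have hi := hibd i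
      rw [hwdef]
      simp only []
      by_cases hc : ((i : ℕ) : ℤ) ≤ j + t
      · rw [if_pos ⟨by omega, by omega⟩, if_pos hc]
      · rw [if_neg (by omega), if_neg hc]
    -- middle piece
    have hmid : ∑ j ∈ Finset.Ioc ((r : ℤ) - 1) ((n : ℤ) - 1 - t),
            (Φ fun i => w (j + (t : ℤ) - ((i : ℕ) : ℤ))) * β ^ j
        = lam * ∑ j ∈ Finset.Ioc ((r : ℤ) - 1) ((n : ℤ) - 1 - t), β ^ j := by
      rw [Finset.mul_sum]
      refine Finset.sum_congr rfl fun j hj => ?_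
      rw [Finset.mem_Ioc] at hj
      congr 1
      rw [← hΦ]
      congr 1
      funext i
      have hi := hibd i
      rw [hwdef]
      simp only []
      rw [if_pos ⟨by omega, by omega⟩]
    -- top piece
    have htop : ∑ j ∈ Finset.Ioc ((n : ℤ) - 1 - t) ((n : ℤ) + r - 1),
            (Φ fun i => w (j + (t : ℤ) - ((i : ℕ) : ℤ))) * β ^ j
        = β ^ (n : ℤ) * C := by
      have hmap : Finset.Ioc ((n : ℤ) - 1 - t) ((n : ℤ) + r - 1)
          = Finset.map (addRightEmbedding (n : ℤ)) (Finset.Ioc (-(t : ℤ) - 1) ((r : ℤ) - 1)) := by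
        rw [Finset.map_add_right_Ioc]
        congr 1 <;> omega
      rw [hmap, Finset.sum_map, hCdef, Finset.mul_sum]
      refine Finset.sum_congr rfl fun m hm => ?_
      rw [Finset.mem_Ioc] at hm
      have hz : (Φ fun i => w ((addRightEmbedding (n : ℤ) m) + (t : ℤ) - ((i : ℕ) : ℤ)))
          = f m := by
        rw [hfdef]
        simp only [addRightEmbedding_apply]
        congr 1
        funext i
        have hi := hibd i
        rw [hwdef]
        simp only []
        by_cases hc : m + (t : ℤ) + 1 ≤ ((i : ℕ) : ℤ)
        · rw [if_pos ⟨by omega, by omega⟩, if_pos hc]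
        · rw [if_neg (by omega), if_neg hc]
      rw [hz]
      simp only [addRightEmbedding_apply]
      rw [zpow_add₀ hβne]
      ring
    rw [hsplit, hbot, hmid, htop] at heq'
    linarith [heq']
  -- instantiate at n = r + t and n = r + t + 1
  have keyA := key (r + t) le_rfl
  have keyB := key (r + t + 1) (by omega)
  set n : ℤ := ((r + t : ℕ) : ℤ) with hndef
  have hcast1 : (((r + t + 1 : ℕ)) : ℤ) = n + 1 := by push_cast [hndef]; ring
  rw [hcast1] at keyB
  have e1 : n + 1 - 1 = (n - 1) + 1 := by ring
  have e2 : n + 1 - 1 - (t : ℤ) = (n - 1 - t) + 1 := by ring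
  rw [e2, e1, sum_Ioc_succ _ (by omega : (-1 : ℤ) ≤ n - 1),
    sum_Ioc_succ _ (by omega : (r : ℤ) - 1 ≤ n - 1 - t),
    zpow_add_one₀ hβne n] at keyB
  have hexp1 : n - 1 + 1 = n := by ring
  have hexp2 : n - 1 - (t : ℤ) + 1 = n - t := by ring
  rw [hexp1, hexp2] at keyB
  -- E1 : b * β^n = lam * β^(n-t) + β^n * (β - 1) * C
  have E1 : b * β ^ n = lam * β ^ (n - (t : ℤ)) + β ^ n * (β - 1) * C := by
    linear_combination keyB - keyA
  -- geometric sums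
  have hG1 : (β - 1) * ∑ j ∈ Finset.Ioc (-1 : ℤ) (n - 1), β ^ j = β ^ n - 1 := by
    have := geom_Ioc hβne (by omega : (-1 : ℤ) ≤ n - 1)
    rw [show n - 1 + 1 = n by ring, show (-1 : ℤ) + 1 = 0 by ring, zpow_zero] at this
    exact this
  have hG2 : (β - 1) * ∑ j ∈ Finset.Ioc ((r : ℤ) - 1) (n - 1 - t), β ^ j
      = β ^ (n - (t : ℤ)) - β ^ (r : ℤ) := by
    have := geom_Ioc hβne (by omega : (r : ℤ) - 1 ≤ n - 1 - t)
    rw [show n - 1 - (t : ℤ) + 1 = n - t by ring, show (r : ℤ) - 1 + 1 = r by ring] at this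
    exact this
  have hG3 : (β - 1) * ∑ j ∈ Finset.Ioc (-(t : ℤ) - 1) ((r : ℤ) - 1), β ^ j
      = β ^ (r : ℤ) - β ^ (-(t : ℤ)) := by
    have := geom_Ioc hβne (by omega : (-(t : ℤ) - 1) ≤ (r : ℤ) - 1)
    rw [show (r : ℤ) - 1 + 1 = r by ring, show -(t : ℤ) - 1 + 1 = -t by ring] at this
    exact this
  -- E2 : (β - 1) * D = lam * β^r - b
  have E2 : (β - 1) * D = lam * β ^ (r : ℤ) - b := by
    linear_combination b * hG1 - lam * hG2 + E1 - (β - 1) * keyA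
  -- lower bound on D
  have hDlb : lam * ∑ j ∈ Finset.Ioc (-(t : ℤ) - 1) ((r : ℤ) - 1), β ^ j ≤ D := by
    rw [hDdef, Finset.mul_sum]
    refine Finset.sum_le_sum fun j _ => ?_
    have hgA : g j ∈ A := by
      apply hΦA
      intro i
      by_cases hc : ((i : ℕ) : ℤ) ≤ j + t
      · simpa [hgdef, hc] using hb
      · simpa [hgdef, hc] using h0B
    have : lam ≤ g j := Finset.min'_le A _ hgA
    exact mul_le_mul_of_nonneg_right this (le_of_lt (zpow_pos hβ0 j))
  -- conclude b ≤ lam * β^(-t)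
  have hfin : b ≤ lam * β ^ (-(t : ℤ)) := by
    have h1 : (β - 1) * (lam * ∑ j ∈ Finset.Ioc (-(t : ℤ) - 1) ((r : ℤ) - 1), β ^ j)
        ≤ (β - 1) * D := mul_le_mul_of_nonneg_left hDlb (by linarith)
    rw [E2] at h1
    have h2 : (β - 1) * (lam * ∑ j ∈ Finset.Ioc (-(t : ℤ) - 1) ((r : ℤ) - 1), β ^ j)
        = lam * (β ^ (r : ℤ) - β ^ (-(t : ℤ))) := by
      rw [← hG3]; ring
    rw [h2] at h1
    nlinarith [h1]
  have hlam0 : lam ≤ 0 := Finset.min'_le A 0 h0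
  rcases hcase with hb0 | ht0
  · -- 0 ≤ b
    have hpow : (0 : ℝ) < β ^ (-(t : ℤ)) := zpow_pos hβ0 _
    rcases lt_or_eq_of_le hlam0 with hlt | heq0
    · have hneg : lam * β ^ (-(t : ℤ)) < 0 := mul_neg_of_neg_of_pos hlt hpow
      linarith
    · rw [heq0] at hfin hblam
      simp only [zero_mul] at hfin
      linarith
  · subst ht0
    simp only [Nat.cast_zero, neg_zero, zpow_zero, mul_one] at hfin
    linarith
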